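/- With the same recursive definition I^a_0 := M^a, I^a_{m+1} := ⋂_{b∈G} { e ∈ I^b_m | μ^a(b) }: if there exist agents a, b ∈ G with μ^a(b) false (a cannot see b), then for every agent c ∈ G and all m ≥ 2, I^c_m = ∅. -/
import Mathlib


/-- The recursive knowledge sets: `knowSet G M 0 a = M a` and
`knowSet G M (m+1) a = ⋂_{b ∈ G} { e ∈ knowSet G M m b | b ∈ M a }`. -/
def knowSet {E : Type*} (G : Set E) (M : E → Set E) : ℕ → E → Set E
  | 0, a => M a
  | m + 1, a => ⋂ b ∈ G, {e ∈ knowSet G M m b | b ∈ M a}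

theorem stmt1 {E : Type*} [Fintype E] (G : Set E) (M : E → Set E)
    (hself : ∀ a ∈ G, a ∈ M a)
    (hblind : ∃ a ∈ G, ∃ b ∈ G, b ∉ M a) :
    ∀ c ∈ G, ∀ m : ℕ, 2 ≤ m → knowSet G M m c = ∅ := by
  obtain ⟨a, ha, b, hb, hab⟩ := hblind
  have h1 : knowSet G M 1 a = ∅ := by
    ext e
    simp only [knowSet, Set.mem_iInter, Set.mem_setOf_eq, Set.mem_empty_iff_false, iff_false,
      not_forall]
    exact ⟨b, hb, fun h => hab h.2⟩
  -- main: for all m ≥ 1, there exists d ∈ G with knowSet G M m d = ∅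
  have key : ∀ m : ℕ, 1 ≤ m → ∃ d ∈ G, knowSet G M m d = ∅ := by
    intro m hm
    induction m with
    | zero => omega
    | succ n ih =>
      rcases Nat.eq_or_lt_of_le hm with h | h
      · exact ⟨a, ha, by rw [← h]; exact h1⟩
      · obtain ⟨d, hd, hde⟩ := ih (by omega)
        refine ⟨d, hd, ?_⟩
        ext e
        simp only [knowSet, Set.mem_iInter, Set.mem_setOf_eq, Set.mem_empty_iff_false, iff_false,
          not_forall]
        exact ⟨d, hd, fun h => by rw [hde] at h; exact h.1⟩
  intro c hc m hm
  obtain ⟨n, rfl⟩ : ∃ n, m = n + 1 := ⟨m - 1, by omega⟩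
  obtain ⟨d, hd, hde⟩ := key n (by omega)
  ext e
  simp only [knowSet, Set.mem_iInter, Set.mem_setOf_eq, Set.mem_empty_iff_false, iff_false,
    not_forall]
  exact ⟨d, hd, fun h => by rw [hde] at h; exact h.1⟩
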